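/- arXiv:1308.6045 — 3 statements merged into one kernel-verified Lean document; each statement's English description precedes it below -/
import Mathlib

section
/- Let (Z,p) ⊂ (M,p) be a reduced complete intersection defined by a regular sequence g_1,…,g_k in the local ring O of M at p, and let f ∈ O be such that the multiplicity of f along Z at the generic point of every component of Z is at least p. Then f ∈ I^p where I = (g_1,…,g_k); explicitly, f can be written as a sum over multi-indices (m_1,…,m_k) with m_1+⋯+m_k = p of terms g_1^{m_1}⋯g_k^{m_k}·a_{m_1,…,m_k} with a_{m_1,…,m_k} ∈ O. -/
open MvPolynomial RingTheory.Sequence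

section QR

variable {O : Type*} [CommRing O]

/-- The ideal of a list `ofFn g` is the span of the range. -/
lemma ofList_ofFn {k : ℕ} (g : Fin k → O) :
    Ideal.ofList (List.ofFn g) = Ideal.span (Set.range g) := by
  unfold Ideal.ofList
  congr 1
  ext x
  exact List.mem_ofFn' g x

/-- products of powers of the `g i` lie in the corresponding power of the span. -/
lemma prod_pow_mem {k : ℕ} (g : Fin k → O) (d : Fin k →₀ ℕ) :
    (d.prod fun i e => g i ^ e) ∈ (Ideal.span (Set.range g)) ^ (d.degree) := by
  classical
  set I := Ideal.span (Set.range g) with hI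
  rw [Finsupp.prod, Finsupp.degree_apply]
  generalize d.support = s
  induction s using Finset.induction with
  | empty => simp
  | @insert a s ha ih =>
    rw [Finset.prod_insert ha, Finset.sum_insert ha, pow_add]
    have h1 : g a ^ d a ∈ I ^ d a :=
      Ideal.pow_mem_pow (Ideal.subset_span (Set.mem_range_self a)) _
    exact Ideal.mul_mem_mul h1 ih

/-- Evaluation of a homogeneous polynomial with coefficients in `J` lands in `J * I^n`. -/
lemma eval_mem {k : ℕ} (g : Fin k → O) {n : ℕ} {F : MvPolynomial (Fin k) O}
    (hF : F.IsHomogeneous n) (J : Ideal O) (hc : ∀ d, coeff d F ∈ J) :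
    aeval g F ∈ J * (Ideal.span (Set.range g)) ^ n := by
  classical
  have hrw : aeval g F = ∑ d ∈ F.support, aeval g (monomial d (coeff d F)) := by
    rw [← map_sum, F.support_sum_monomial_coeff]
  rw [hrw]
  refine Ideal.sum_mem _ fun d hd => ?_
  rw [aeval_monomial]
  have hdeg : d.degree = n := by
    have h := hF (mem_support_iff.mp hd)
    rw [Finsupp.degree_eq_weight_one]
    exact h
  refine Ideal.mul_mem_mul ?_ (hdeg ▸ prod_pow_mem g d)
  simpa using hc d

lemma eval_mem' {k : ℕ} (g : Fin k → O) {n : ℕ} {F : MvPolynomial (Fin k) O}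
    (hF : F.IsHomogeneous n) :
    aeval g F ∈ (Ideal.span (Set.range g)) ^ n := by
  have := eval_mem g hF ⊤ (fun d => trivial)
  rwa [Ideal.top_mul] at this

/-- Every element of `I^n` is the value of a homogeneous polynomial of degree `n`. -/
lemma exists_homog {k : ℕ} (g : Fin k → O) (n : ℕ) :
    ∀ x ∈ (Ideal.span (Set.range g)) ^ n,
      ∃ F : MvPolynomial (Fin k) O, F.IsHomogeneous n ∧ aeval g F = x := by
  induction n with
  | zero =>
    intro x _
    exact ⟨C x, isHomogeneous_C _ _, by simp⟩
  | succ n ih =>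
    intro x hx
    rw [pow_succ] at hx
    refine Submodule.mul_induction_on hx ?_ ?_
    · intro m hm i hi
      obtain ⟨F, hFh, hFe⟩ := ih m hm
      have : ∃ G : MvPolynomial (Fin k) O, G.IsHomogeneous 1 ∧ aeval g G = i := by
        refine Submodule.span_induction ?_ ?_ ?_ ?_ hi
        · rintro _ ⟨j, rfl⟩
          exact ⟨X j, isHomogeneous_X _ _, by simp⟩
        · exact ⟨0, isHomogeneous_zero _ _ _, by simp⟩
        · rintro y z - - ⟨Fy, hy, ey⟩ ⟨Fz, hz, ez⟩
          exact ⟨Fy + Fz, hy.add hz, by simp [← ey, ← ez]⟩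
        · rintro c y - ⟨Fy, hy, ey⟩
          exact ⟨C c * Fy, by simpa using (isHomogeneous_C _ c).mul hy,
            by simp [← ey, smul_eq_mul]⟩
      obtain ⟨G, hGh, hGe⟩ := this
      exact ⟨F * G, hFh.mul hGh, by simp [← hFe, ← hGe]⟩
    · rintro y z ⟨Fy, hy, ey⟩ ⟨Fz, hz, ez⟩
      exact ⟨Fy + Fz, hy.add hz, by simp [← ey, ← ez]⟩

/-- A polynomial homogeneous of degree 0 is a constant. -/
lemma homog_zero_eq_C {k : ℕ} {F : MvPolynomial (Fin k) O} (hF : F.IsHomogeneous 0) :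
    F = C (coeff 0 F) := by
  ext d
  rcases eq_or_ne d 0 with rfl | hd
  · simp
  · rw [hF.coeff_eq_zero (by simpa [Finsupp.degree_eq_zero_iff] using hd)]
    rw [coeff_C, if_neg (by exact fun h => hd h.symm)]

/-- If quasi-regularity holds for `g` and `s` is a nonzerodivisor mod `I`, then
`s` is a nonzerodivisor mod every power of `I`. -/
lemma colon_pow {k : ℕ} (g : Fin k → O)
    (qr : ∀ (n : ℕ) (F : MvPolynomial (Fin k) O), F.IsHomogeneous n →
      aeval g F ∈ (Ideal.span (Set.range g)) ^ (n + 1) →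
      ∀ d, coeff d F ∈ Ideal.span (Set.range g))
    {s : O} (hs : ∀ y, s * y ∈ Ideal.span (Set.range g) → y ∈ Ideal.span (Set.range g)) :
    ∀ (n : ℕ) (y : O), s * y ∈ (Ideal.span (Set.range g)) ^ n →
      y ∈ (Ideal.span (Set.range g)) ^ n := by
  intro n
  induction n with
  | zero => intro y _; simp
  | succ n ih =>
    intro y hy
    have hyn : y ∈ (Ideal.span (Set.range g)) ^ n :=
      ih y (Ideal.pow_le_pow_right (Nat.le_succ n) hy)
    obtain ⟨F, hFh, hFe⟩ := exists_homog g n y hyn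
    have hsF : aeval g (C s * F) ∈ (Ideal.span (Set.range g)) ^ (n + 1) := by
      rw [map_mul, aeval_C]
      simpa [hFe] using hy
    have hch : (C s * F).IsHomogeneous n := by
      simpa using (isHomogeneous_C _ s).mul hFh
    have hcoeff : ∀ d, coeff d F ∈ Ideal.span (Set.range g) := by
      intro d
      have := qr n (C s * F) hch hsF d
      rw [coeff_C_mul] at this
      exact hs _ this
    have := eval_mem g hFh (Ideal.span (Set.range g)) hcoeff
    rw [← pow_succ'] at this
    rwa [hFe] at this

end QR

section Peel

variable {O : Type*} [CommRing O] {k : ℕ}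

/-- `I = I' ⊔ (a)` where `I'` is generated by the first `k` elements. -/
lemma span_range_succ (g : Fin (k + 1) → O) :
    Ideal.span (Set.range g) =
      Ideal.span (Set.range (g ∘ Fin.castSucc)) ⊔ Ideal.span {g (Fin.last k)} := by
  rw [← Ideal.span_union]
  congr 1
  ext x
  constructor
  · rintro ⟨i, rfl⟩
    rcases Fin.eq_castSucc_or_eq_last i with ⟨j, rfl⟩ | rfl
    · exact Or.inl ⟨j, rfl⟩
    · exact Or.inr rfl
  · rintro (⟨j, rfl⟩ | rfl)
    · exact ⟨j.castSucc, rfl⟩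
    · exact ⟨Fin.last k, rfl⟩

/-- Decomposition `I^(M+1) ≤ I'^(M+1) ⊔ a·I^M`. -/
lemma pow_decomp (g : Fin (k + 1) → O) (M : ℕ) :
    (Ideal.span (Set.range g)) ^ (M + 1) ≤
      (Ideal.span (Set.range (g ∘ Fin.castSucc))) ^ (M + 1) ⊔
        Ideal.span {g (Fin.last k)} * (Ideal.span (Set.range g)) ^ M := by
  set I := Ideal.span (Set.range g)
  set I' := Ideal.span (Set.range (g ∘ Fin.castSucc))
  set a := g (Fin.last k)
  have hI : I = I' ⊔ Ideal.span {a} := span_range_succ g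
  have hI'le : I' ≤ I := by
    rw [hI]; exact le_sup_left
  induction M with
  | zero =>
    rw [pow_one, pow_one, pow_zero, mul_one]
    exact le_of_eq hI
  | succ M ih =>
    calc I ^ (M + 2) = I ^ (M + 1) * I := by rw [pow_succ]
    _ ≤ (I' ^ (M + 1) ⊔ Ideal.span {a} * I ^ M) * I := Ideal.mul_mono_left ih
    _ = I' ^ (M + 1) * I ⊔ Ideal.span {a} * (I ^ M * I) := by
        rw [Submodule.sup_mul, mul_assoc]
    _ ≤ I' ^ (M + 2) ⊔ Ideal.span {a} * I ^ (M + 1) := by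
        apply sup_le
        · have : I' ^ (M + 1) * I = I' ^ (M + 2) ⊔ I' ^ (M + 1) * Ideal.span {a} := by
            conv_lhs => rw [hI]
            rw [Ideal.mul_sup, ← pow_succ]
          rw [this]
          apply sup_le le_sup_left
          rw [mul_comm]
          calc Ideal.span {a} * I' ^ (M + 1)
              ≤ Ideal.span {a} * I ^ (M + 1) :=
                Ideal.mul_mono_right (Ideal.pow_right_mono hI'le _)
          _ ≤ I' ^ (M + 2) ⊔ Ideal.span {a} * I ^ (M + 1) := le_sup_right
        · rw [← pow_succ]
          exact le_sup_right

/-- Membership form of the decomposition. -/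
lemma mem_pow_decomp (g : Fin (k + 1) → O) (M : ℕ) {x : O}
    (hx : x ∈ (Ideal.span (Set.range g)) ^ (M + 1)) :
    ∃ u ∈ (Ideal.span (Set.range (g ∘ Fin.castSucc))) ^ (M + 1),
      ∃ v ∈ (Ideal.span (Set.range g)) ^ M, x = u + g (Fin.last k) * v := by
  have := pow_decomp g M hx
  rw [Submodule.mem_sup] at this
  obtain ⟨u, hu, w, hw, rfl⟩ := this
  rw [Ideal.mem_span_singleton_mul] at hw
  obtain ⟨v, hv, rfl⟩ := hw
  exact ⟨u, hu, v, hv, rfl⟩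

/-- From weak regularity of `ofFn g`: the prefix is weakly regular and the last
element is a nonzerodivisor modulo the prefix ideal. -/
lemma peel_last (g : Fin (k + 1) → O)
    (h : IsWeaklyRegular O (List.ofFn g)) :
    IsWeaklyRegular O (List.ofFn (g ∘ Fin.castSucc)) ∧
      (∀ y, g (Fin.last k) * y ∈ Ideal.span (Set.range (g ∘ Fin.castSucc)) →
        y ∈ Ideal.span (Set.range (g ∘ Fin.castSucc))) := by
  have hl : List.ofFn g = List.ofFn (g ∘ Fin.castSucc) ++ [g (Fin.last k)] := by
    rw [List.ofFn_succ']
    simp [List.concat_eq_append]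
    rfl
  rw [hl, isWeaklyRegular_append_iff] at h
  obtain ⟨h1, h2⟩ := h
  refine ⟨h1, ?_⟩
  rw [isWeaklyRegular_singleton_iff] at h2
  intro y hy
  have hsm : (Ideal.ofList (List.ofFn (g ∘ Fin.castSucc)) • ⊤ : Submodule O O)
      = Ideal.span (Set.range (g ∘ Fin.castSucc)) := by
    rw [Ideal.smul_eq_mul, Ideal.mul_top, ofList_ofFn]
  rw [hsm] at h2
  have h0 : g (Fin.last k) • (Submodule.Quotient.mk y :
      O ⧸ (Ideal.span (Set.range (g ∘ Fin.castSucc)) : Submodule O O)) = 0 := by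
    rw [← Submodule.Quotient.mk_smul, Submodule.Quotient.mk_eq_zero]
    simpa [smul_eq_mul] using hy
  have := h2 (by rw [h0, smul_zero] :
    g (Fin.last k) • (Submodule.Quotient.mk y :
      O ⧸ (Ideal.span (Set.range (g ∘ Fin.castSucc)) : Submodule O O)) =
    g (Fin.last k) • (0 : O ⧸ (Ideal.span (Set.range (g ∘ Fin.castSucc)) : Submodule O O)))
  rw [← Submodule.Quotient.mk_eq_zero]
  exact this

end Peel

section DegreeHelpers

lemma degree_add' {σ : Type*} (c d : σ →₀ ℕ) :
    (c + d).degree = c.degree + d.degree := by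
  simp only [Finsupp.degree_eq_weight_one]
  exact map_add _ c d

lemma degree_single' {σ : Type*} (i : σ) (n : ℕ) :
    (Finsupp.single i n).degree = n := by
  classical
  rcases eq_or_ne n 0 with rfl | hn
  · simp [Finsupp.degree]
  · rw [Finsupp.degree_apply, Finsupp.support_single_ne_zero i hn]
    simp

lemma degree_mapDomain' {σ τ : Type*} (f : σ → τ) (hf : Function.Injective f)
    (c : σ →₀ ℕ) : (Finsupp.mapDomain f c).degree = c.degree := by
  classical
  rw [Finsupp.degree_apply, Finsupp.degree_apply, Finsupp.mapDomain_support_of_injective hf,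
    Finset.sum_image (fun x _ y _ h => hf h)]
  exact Finset.sum_congr rfl fun i _ => Finsupp.mapDomain_apply hf c i

end DegreeHelpers

section Main

variable {O : Type*} [CommRing O]

/-- Regular sequences are quasi-regular: a homogeneous polynomial of degree `n`
whose value at `g` lies in `I^(n+1)` has all coefficients in `I`. -/
lemma quasireg : ∀ {k : ℕ} (g : Fin k → O),
    IsWeaklyRegular O (List.ofFn g) →
    ∀ (n : ℕ) (F : MvPolynomial (Fin k) O), F.IsHomogeneous n →
    aeval g F ∈ (Ideal.span (Set.range g)) ^ (n + 1) →
    ∀ d, coeff d F ∈ Ideal.span (Set.range g) := by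
  intro k
  induction k with
  | zero =>
    intro g _ n F _ hFe d
    have hbot : Ideal.span (Set.range g) = ⊥ := by
      rw [Set.range_eq_empty, Ideal.span_empty]
    rw [hbot] at hFe ⊢
    rw [← Ideal.zero_eq_bot, zero_pow (Nat.succ_ne_zero n)] at hFe
    obtain ⟨c, rfl⟩ := MvPolynomial.C_surjective (Fin 0) F
    have : c = aeval g (C c) := by simp
    rw [Ideal.zero_eq_bot] at hFe
    simp only [coeff_C]
    split
    · rw [this]; exact hFe
    · exact Submodule.zero_mem _
  | succ k IH =>
    intro g hreg
    classical
    obtain ⟨hreg', hnzd⟩ := peel_last g hreg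
    have qr' := IH (g ∘ Fin.castSucc) hreg'
    have colon' := colon_pow (g ∘ Fin.castSucc) qr' hnzd
    set I : Ideal O := Ideal.span (Set.range g) with hIdef
    set I' : Ideal O := Ideal.span (Set.range (g ∘ Fin.castSucc)) with hI'def
    set a : O := g (Fin.last k) with hadef
    have ha : a ∈ I := Ideal.subset_span (Set.mem_range_self _)
    have hI'le : I' ≤ I := by
      rw [hIdef, hI'def, span_range_succ g]; exact le_sup_left
    have cinj : Function.Injective (Fin.castSucc : Fin k → Fin (k + 1)) :=
      Fin.castSucc_injective k
    intro n
    induction n using Nat.strong_induction_on with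
    | _ n IHn =>
    intro F hF hFe
    rcases n with _ | m
    · -- degree 0
      intro d
      rw [homog_zero_eq_C hF, coeff_C]
      split
      · have : aeval g (C (coeff 0 F) : MvPolynomial (Fin (k + 1)) O) = coeff 0 F := by simp
        rw [homog_zero_eq_C hF, this, pow_one] at hFe
        exact hFe
      · exact Submodule.zero_mem _
    · -- degree m + 1
      set e : Fin (k + 1) →₀ ℕ := Finsupp.single (Fin.last k) 1 with hedef
      set P : Finset (Fin (k + 1) →₀ ℕ) :=
        F.support.filter (fun d => d (Fin.last k) = 0) with hPdef
      set G : MvPolynomial (Fin (k + 1)) O :=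
        ∑ d ∈ P, monomial d (coeff d F) with hGdef
      have hGc : ∀ d, coeff d G = if d (Fin.last k) = 0 then coeff d F else 0 := by
        intro d
        rw [hGdef, coeff_sum]
        simp only [coeff_monomial]
        by_cases h1 : d (Fin.last k) = 0
        · rw [if_pos h1]
          by_cases h2 : d ∈ F.support
          · rw [Finset.sum_eq_single_of_mem d
              (by rw [hPdef]; exact Finset.mem_filter.mpr ⟨h2, h1⟩)
              (fun b _ hb => if_neg hb), if_pos rfl]
          · rw [notMem_support_iff.mp h2]
            refine Finset.sum_eq_zero fun d' hd' => ?_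
            rcases eq_or_ne d' d with rfl | hne
            · exact absurd (Finset.mem_of_mem_filter d' hd') h2
            · exact if_neg hne
        · rw [if_neg h1]
          refine Finset.sum_eq_zero fun d' hd' => ?_
          rcases eq_or_ne d' d with rfl | hne
          · exact absurd (Finset.mem_filter.mp hd').2 h1
          · exact if_neg hne
      have hFG : F - G ∈ Ideal.span {(X (Fin.last k) : MvPolynomial (Fin (k + 1)) O)} := by
        have hsub : P ⊆ F.support := Finset.filter_subset _ _
        have h1 : (∑ d ∈ F.support \ P, monomial d (coeff d F)) + G = F := by
          rw [hGdef, Finset.sum_sdiff hsub, F.support_sum_monomial_coeff]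
        have h2 : F - G = ∑ d ∈ F.support \ P, monomial d (coeff d F) :=
          sub_eq_of_eq_add h1.symm
        rw [h2]
        refine Ideal.sum_mem _ fun d hd => ?_
        have hdlast : d (Fin.last k) ≠ 0 := by
          intro h0
          obtain ⟨hmem, hnot⟩ := Finset.mem_sdiff.mp hd
          exact hnot (Finset.mem_filter.mpr ⟨hmem, h0⟩)
        refine Ideal.mem_span_singleton.mpr ⟨monomial (d - e) (coeff d F), ?_⟩
        have hde : Finsupp.single (Fin.last k) 1 + (d - e) = d := by
          ext i
          simp only [Finsupp.add_apply, Finsupp.tsub_apply, hedef, Finsupp.single_apply]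
          split_ifs with h
          · subst h
            omega
          · omega
        have hmon : X (Fin.last k) * monomial (d - e) (coeff d F)
            = monomial (Finsupp.single (Fin.last k) 1 + (d - e)) (coeff d F) := by
          rw [monomial_single_add, pow_one]
        rw [hmon, hde]
      obtain ⟨H, hH⟩ := Ideal.mem_span_singleton.mp hFG
      have hFdecomp : F = G + X (Fin.last k) * H :=
        (eq_add_of_sub_eq hH).trans (add_comm _ _)
      have hHc : ∀ c, coeff c H = coeff (c + e) F := by
        intro c
        have h1 : coeff (c + e) (X (Fin.last k) * H) = coeff c H := by
          rw [mul_comm, hedef]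
          exact coeff_mul_X c _ H
        have h2 : coeff (c + e) (F - G) = coeff c H := by rw [hH, h1]
        rw [coeff_sub] at h2
        have h3 : coeff (c + e) G = 0 := by
          rw [hGc]
          rw [if_neg]
          simp [hedef]
        rw [h3, sub_zero] at h2
        exact h2.symm
      have hHhom : H.IsHomogeneous m := by
        intro c hc
        rw [hHc] at hc
        have h1 := hF hc
        rw [show (Finsupp.weight 1 : (Fin (k + 1) →₀ ℕ) →+ ℕ) = Finsupp.degree from
          Finsupp.degree_eq_weight_one.symm] at h1 ⊢
        rw [degree_add', degree_single'] at h1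
        omega
      -- the polynomial G₀ in the first k variables
      set G₀ : MvPolynomial (Fin k) O :=
        ∑ d ∈ P, monomial (Finsupp.comapDomain Fin.castSucc d cinj.injOn) (coeff d F)
        with hG₀def
      have hsupprange : ∀ d ∈ P, ↑d.support ⊆ Set.range (Fin.castSucc : Fin k → Fin (k + 1)) := by
        intro d hd i hi
        rcases Fin.eq_castSucc_or_eq_last i with ⟨j, rfl⟩ | rfl
        · exact ⟨j, rfl⟩
        · exfalso
          have : d (Fin.last k) = 0 := (Finset.mem_filter.mp hd).2
          exact (Finsupp.mem_support_iff.mp hi) this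
      have hren : rename Fin.castSucc G₀ = G := by
        rw [hG₀def, hGdef, map_sum]
        refine Finset.sum_congr rfl fun d hd => ?_
        rw [rename_monomial, Finsupp.mapDomain_comapDomain _ cinj d (hsupprange d hd)]
      have hG₀c : ∀ c, coeff c G₀ = coeff (Finsupp.mapDomain Fin.castSucc c) F := by
        intro c
        have h1 := coeff_rename_mapDomain Fin.castSucc cinj G₀ c
        rw [hren] at h1
        rw [← h1, hGc]
        rw [if_pos]
        apply Finsupp.mapDomain_notin_range
        rintro ⟨j, hj⟩
        exact absurd hj (Fin.castSucc_lt_last j).ne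
      have hG₀hom : G₀.IsHomogeneous (m + 1) := by
        intro c hc
        rw [hG₀c] at hc
        have h1 := hF hc
        rw [show (Finsupp.weight 1 : (Fin (k + 1) →₀ ℕ) →+ ℕ) = Finsupp.degree from
          Finsupp.degree_eq_weight_one.symm] at h1
        rw [show (Finsupp.weight 1 : (Fin k →₀ ℕ) →+ ℕ) = Finsupp.degree from
          Finsupp.degree_eq_weight_one.symm]
        rw [degree_mapDomain' _ cinj] at h1
        exact h1
      have heval : aeval g F = aeval (g ∘ Fin.castSucc) G₀ + a * aeval g H := by
        conv_lhs => rw [hFdecomp]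
        rw [map_add, map_mul, aeval_X, ← hren, aeval_rename]
      -- main chain
      obtain ⟨u, hu, v, hv, huv⟩ := mem_pow_decomp g (m + 1) hFe
      rw [← hadef] at huv
      have hkey : a * (v - aeval g H) = aeval (g ∘ Fin.castSucc) G₀ - u := by
        linear_combination heval - huv
      have hGu : aeval (g ∘ Fin.castSucc) G₀ - u ∈ I' ^ (m + 1) :=
        sub_mem (eval_mem' _ hG₀hom) (Ideal.pow_le_pow_right (Nat.le_succ _) hu)
      have hq : v - aeval g H ∈ I' ^ (m + 1) := colon' (m + 1) _ (by rw [hkey]; exact hGu)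
      have hHe : aeval g H ∈ I ^ (m + 1) := by
        have h1 : aeval g H = v - (v - aeval g H) := by ring
        rw [h1]
        exact sub_mem hv (Ideal.pow_right_mono hI'le _ hq)
      have hHcoe : ∀ c, coeff c H ∈ I := IHn m (Nat.lt_succ_self m) H hHhom hHe
      have haH : a * aeval g H ∈ I ^ (m + 1 + 1) := by
        have h1 : aeval g H ∈ I * I ^ m := eval_mem g hHhom I hHcoe
        have h2 : a * aeval g H ∈ I * (I * I ^ m) := Ideal.mul_mem_mul ha h1
        rwa [← pow_succ', ← pow_succ'] at h2
      have hGe : aeval (g ∘ Fin.castSucc) G₀ ∈ I ^ (m + 1 + 1) := by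
        have h1 : aeval (g ∘ Fin.castSucc) G₀ = aeval g F - a * aeval g H := by
          linear_combination -heval
        rw [h1]
        exact sub_mem hFe haH
      obtain ⟨w, hw, t, ht, hwt⟩ := mem_pow_decomp g (m + 1) hGe
      rw [← hadef] at hwt
      have hat : a * t ∈ I' ^ (m + 1) := by
        have h1 : a * t = aeval (g ∘ Fin.castSucc) G₀ - w := by linear_combination -hwt
        rw [h1]
        exact sub_mem (eval_mem' _ hG₀hom) (Ideal.pow_le_pow_right (Nat.le_succ _) hw)
      have ht' : t ∈ I' ^ (m + 1) := colon' (m + 1) t hat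
      obtain ⟨T, hThom, hTe⟩ := exists_homog (g ∘ Fin.castSucc) (m + 1) t ht'
      have hsub : aeval (g ∘ Fin.castSucc) (G₀ - C a * T) = w := by
        rw [map_sub, map_mul, aeval_C]
        simp only [Algebra.algebraMap_self_apply]
        rw [hTe]
        linear_combination hwt
      have hGsub : ∀ c, coeff c (G₀ - C a * T) ∈ I' := by
        refine qr' (m + 1) _ (hG₀hom.sub ?_) (by rw [hsub]; exact hw)
        simpa using (isHomogeneous_C (Fin k) a).mul hThom
      have hG₀mem : ∀ c, coeff c G₀ ∈ I := by
        intro c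
        have h1 := hGsub c
        rw [coeff_sub, coeff_C_mul] at h1
        have h2 : coeff c G₀ = (coeff c G₀ - a * coeff c T) + a * coeff c T := by ring
        rw [h2]
        exact Ideal.add_mem _ (hI'le h1) (I.mul_mem_right _ ha)
      -- conclude
      intro d
      by_cases hd : d (Fin.last k) = 0
      · have hdP : ↑d.support ⊆ Set.range (Fin.castSucc : Fin k → Fin (k + 1)) := by
          intro i hi
          rcases Fin.eq_castSucc_or_eq_last i with ⟨j, rfl⟩ | rfl
          · exact ⟨j, rfl⟩
          · exact absurd hd (Finsupp.mem_support_iff.mp hi)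
        have hmap : Finsupp.mapDomain Fin.castSucc
            (Finsupp.comapDomain Fin.castSucc d cinj.injOn) = d :=
          Finsupp.mapDomain_comapDomain _ cinj d hdP
        have := hG₀mem (Finsupp.comapDomain Fin.castSucc d cinj.injOn)
        rwa [hG₀c, hmap] at this
      · have hde : (d - e) + e = d := by
          ext i
          simp only [Finsupp.add_apply, Finsupp.tsub_apply, hedef, Finsupp.single_apply]
          split_ifs with h
          · subst h
            omega
          · omega
        have := hHcoe (d - e)
        rwa [hHc, hde] at this

end Main

/-- Lemma 2.3 ("lemma.CM"): if `(Z,p) ⊂ (M,p)` is a reduced complete intersection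
cut out by a regular sequence `g 1, …, g k` in the local ring `O` of `M` at `p`,
and the multiplicity of `f` along `Z` at the generic point of every component of
`Z` (i.e. at every minimal prime over `I = (g_1,…,g_k)`) is at least `p`, then
`f ∈ I ^ p`, i.e. `f` is a sum of terms `g_1^{m_1} ⋯ g_k^{m_k} · a` with
`∑ m_i = p`. -/
theorem stmt_1 {O : Type*} [CommRing O] [IsDomain O] [IsLocalRing O]
    [IsNoetherianRing O] [IsIntegrallyClosed O]
    {k : ℕ} (g : Fin k → O)
    (hreg : RingTheory.Sequence.IsRegular O (List.ofFn g))
    (hred : IsReduced (O ⧸ (Ideal.span (Set.range g) : Ideal O)))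
    (f : O) (p : ℕ)
    (hmult : ∀ (P : Ideal O) [P.IsPrime],
      P ∈ (Ideal.span (Set.range g) : Ideal O).minimalPrimes →
      (algebraMap O (Localization.AtPrime P)) f ∈
        (Ideal.span (Set.range g)).map (algebraMap O (Localization.AtPrime P)) ^ p) :
    f ∈ (Ideal.span (Set.range g) : Ideal O) ^ p := by
  classical
  set I : Ideal O := Ideal.span (Set.range g) with hIdef
  have hwreg : IsWeaklyRegular O (List.ofFn g) := hreg.toIsWeaklyRegular
  have qr := quasireg g hwreg
  -- localization hypothesis gives, for each minimal prime `P`, an `s ∉ P` with `s*f ∈ I^p`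
  have hloc : ∀ P ∈ I.minimalPrimes, ∃ s, s ∉ P ∧ s * f ∈ I ^ p := by
    intro P hP
    haveI hPp : P.IsPrime := hP.1.1
    have h := hmult P hP
    rw [← Ideal.map_pow] at h
    rw [IsLocalization.mem_map_algebraMap_iff P.primeCompl (Localization.AtPrime P)] at h
    obtain ⟨⟨x, s⟩, hx⟩ := h
    rw [← map_mul] at hx
    obtain ⟨c, hc⟩ :=
      (IsLocalization.eq_iff_exists P.primeCompl (Localization.AtPrime P)).mp hx
    refine ⟨(c : O) * (s : O), mul_mem c.2 s.2, ?_⟩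
    have h1 : (c : O) * (s : O) * f = (c : O) * (x : O) := by linear_combination hc
    rw [h1]
    exact Ideal.mul_mem_left _ _ x.2
  have hfin : I.minimalPrimes.Finite := by
    rw [Ideal.minimalPrimes_eq_comap]
    exact (minimalPrimes.finite_of_isNoetherianRing (O ⧸ I)).image _
  set J : Ideal O := (I ^ p).colon (Ideal.span {f}) with hJdef
  have hJ : ∀ P ∈ I.minimalPrimes, ¬(J ≤ P) := by
    intro P hP hle
    obtain ⟨s, hs1, hs2⟩ := hloc P hP
    exact hs1 (hle (Ideal.mem_colon_span_singleton.mpr (by exact hs2)))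
  obtain ⟨s, hsJ, hsP⟩ : ∃ s ∈ J, ∀ P ∈ I.minimalPrimes, s ∉ P := by
    by_contra hcon
    push_neg at hcon
    have hsubset : (J : Set O) ⊆ ⋃ P ∈ hfin.toFinset, ((P : Ideal O) : Set O) := by
      intro s hs
      obtain ⟨P, hP, hsP⟩ := hcon s hs
      exact Set.mem_biUnion (hfin.mem_toFinset.mpr hP) hsP
    obtain ⟨P, hPmem, hle⟩ := (Ideal.subset_union_prime (f := fun P => P) ⊥ ⊥
      (fun P hP _ _ => (hfin.mem_toFinset.mp hP).1.1)).mp hsubset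
    exact hJ P (hfin.mem_toFinset.mp hPmem) hle
  have hradical : I.IsRadical := (Ideal.isRadical_iff_quotient_reduced I).mpr hred
  have hrad : I.radical = I := le_antisymm hradical Ideal.le_radical
  have hs : ∀ y, s * y ∈ I → y ∈ I := by
    intro y hy
    have hmem : y ∈ sInf I.minimalPrimes := by
      rw [Ideal.mem_sInf]
      intro P hP
      haveI : P.IsPrime := hP.1.1
      exact ((Ideal.IsPrime.mem_or_mem ‹P.IsPrime› (hP.1.2 hy))).resolve_left (hsP P hP)
    rwa [Ideal.sInf_minimalPrimes, hrad] at hmem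
  have hsf : s * f ∈ I ^ p := by
    have := Ideal.mem_colon_span_singleton.mp hsJ
    exact this
  exact colon_pow g qr hs p f hsf
end

section
/- For integers k > r ≥ 1 and positive integers p_1,…,p_r, the coefficient of t^{k−r} in the formal power series (1−t)^{k−1}/∏_{i=1}^r(1−p_i t) equals the coefficient of t^{k−r} in (1/k)·(1−t)^k·(Σ_{j=1}^r 1/(1−p_j t))/∏_{i=1}^r(1−p_i t). -/
open PowerSeries

/-- The geometric series `1/(1 - p t) = Σ pⁿ tⁿ` as a formal power series. -/
noncomputable def geom (p : ℕ) : PowerSeries ℚ :=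
  PowerSeries.mk fun n => (p : ℚ) ^ n

lemma geom_eq (p : ℕ) : geom p = 1 + C (p : ℚ) * X * geom p := by
  ext n
  cases n with
  | zero => simp [geom]
  | succ n =>
    rw [mul_assoc, map_add, coeff_C_mul, coeff_succ_X_mul]
    simp [geom, pow_succ, mul_comm]

lemma der_geom (p : ℕ) :
    d⁄dX ℚ (geom p) = C (p : ℚ) * (geom p * geom p) := by
  ext n
  rw [coeff_derivative, coeff_C_mul, coeff_mul]
  simp only [geom, coeff_mk]
  have : ∀ x ∈ Finset.HasAntidiagonal.antidiagonal n,
      (p : ℚ) ^ x.1 * (p : ℚ) ^ x.2 = (p : ℚ) ^ n := by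
    intro x hx
    rw [← pow_add, (Finset.HasAntidiagonal.mem_antidiagonal.mp hx)]
  rw [Finset.sum_congr rfl this, Finset.sum_const, Finset.Nat.card_antidiagonal]
  ring

lemma der_prod {r : ℕ} (p : Fin r → ℕ) (s : Finset (Fin r)) :
    d⁄dX ℚ (∏ i ∈ s, geom (p i))
      = (∏ i ∈ s, geom (p i)) * ∑ j ∈ s, C (p j : ℚ) * geom (p j) := by
  induction s using Finset.induction with
  | empty => simp
  | insert a s hx ih =>
    rw [Finset.prod_insert hx, Finset.sum_insert hx, Derivation.leibniz, ih, der_geom]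
    simp only [smul_eq_mul]
    ring


/-- For `k > r ≥ 1` and positive integers `p₁,…,p_r`, the coefficient of
`t^{k−r}` in `(1−t)^{k−1} / ∏ᵢ (1−pᵢt)` equals the coefficient of `t^{k−r}` in
`(1/k)·(1−t)^k · (Σⱼ 1/(1−pⱼt)) / ∏ᵢ (1−pᵢt)`. -/
theorem stmt_8 (k r : ℕ) (hr : 1 ≤ r) (hkr : r < k)
    (p : Fin r → ℕ) (hp : ∀ i, 0 < p i) :
    coeff (R := ℚ) (k - r) ((1 - X) ^ (k - 1) * ∏ i, geom (p i))
      = coeff (R := ℚ) (k - r)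
        ((k : ℚ)⁻¹ • ((1 - X) ^ k * (∑ j, geom (p j)) * ∏ i, geom (p i))) := by
  set F : PowerSeries ℚ := ∏ i, geom (p i) with hF
  set S : PowerSeries ℚ := ∑ j, C (p j : ℚ) * geom (p j) with hS
  -- sum of geoms
  have hsum : (∑ j, geom (p j)) = (r : ℕ) • (1 : PowerSeries ℚ) + X * S := by
    calc (∑ j, geom (p j)) = ∑ j : Fin r, (1 + C (p j : ℚ) * X * geom (p j)) := by
          exact Finset.sum_congr rfl fun j _ => geom_eq (p j)
      _ = (r : ℕ) • (1 : PowerSeries ℚ) + X * S := by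
          rw [Finset.sum_add_distrib, Finset.sum_const, Finset.card_univ, Fintype.card_fin,
            Finset.mul_sum]
          congr 1
          exact Finset.sum_congr rfl fun j _ => by ring
  have hDF : d⁄dX ℚ F = F * S := der_prod p Finset.univ
  -- derivative of (1-X)^k
  have hk1 : k - 1 + 1 = k := Nat.succ_pred_eq_of_pos (lt_of_le_of_lt (Nat.zero_le r) hkr)
  have hdpow : d⁄dX ℚ ((1 - X : PowerSeries ℚ) ^ k)
      = -((k : ℕ) • ((1 - X : PowerSeries ℚ) ^ (k - 1))) := by
    rw [Derivation.leibniz_pow]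
    have h1 : d⁄dX ℚ ((1 : PowerSeries ℚ) - X) = -1 := by
      rw [map_sub, derivative_X, Derivation.map_one_eq_zero, zero_sub]
    rw [h1]
    simp [smul_eq_mul]
  -- derivative of G0 = (1-X)^k * F
  have hd : d⁄dX ℚ ((1 - X : PowerSeries ℚ) ^ k * F)
      = (1 - X) ^ k * (F * S) - (k : ℕ) • ((1 - X) ^ (k - 1) * F) := by
    rw [Derivation.leibniz, hDF, hdpow]
    simp only [smul_eq_mul, nsmul_eq_mul]
    ring
  -- main power series identity
  have hid : (1 - X : PowerSeries ℚ) ^ k * (∑ j, geom (p j)) * F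
      = (r : ℕ) • ((1 - X) ^ k * F) + X * (d⁄dX ℚ ((1 - X) ^ k * F))
        + (k : ℕ) • (X * ((1 - X) ^ (k - 1) * F)) := by
    rw [hsum, hd]
    simp only [nsmul_eq_mul]
    ring
  -- now take coefficients; set m = k - r ≥ 1
  obtain ⟨m, hm⟩ : ∃ m, k - r = m + 1 :=
    ⟨k - r - 1, (Nat.succ_pred_eq_of_pos (Nat.sub_pos_of_lt hkr)).symm⟩
  set A : PowerSeries ℚ := (1 - X) ^ (k - 1) * F with hA
  have hGA : (1 - X : PowerSeries ℚ) ^ k * F = A - A * X := by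
    rw [hA]
    conv_lhs => rw [← hk1]
    rw [pow_succ]
    ring
  have hcG : coeff (k - r) ((1 - X) ^ k * F)
      = coeff (k - r) A - coeff m A := by
    rw [hGA, map_sub, hm, coeff_succ_mul_X]
  have hcXd : coeff (k - r) (X * (d⁄dX ℚ ((1 - X) ^ k * F)))
      = (coeff (k - r) A - coeff m A) * (k - r : ℕ) := by
    rw [mul_comm, hm, coeff_succ_mul_X, coeff_derivative, ← hm, hcG, hm]
    push_cast
    ring
  have hcXA : coeff (k - r) (X * A) = coeff m A := by
    rw [mul_comm, hm, coeff_succ_mul_X]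
  rw [map_smul, hid, map_add, map_add, map_nsmul, map_nsmul, hcG, hcXd, hcXA]
  have hkc : (k : ℚ) = (r : ℚ) + ((k - r : ℕ) : ℚ) := by
    have h : r + (k - r) = k := Nat.add_sub_cancel' (le_of_lt hkr)
    conv_lhs => rw [← h]
    push_cast
    ring
  have hk0 : (k : ℚ) ≠ 0 := Nat.cast_ne_zero.mpr (by omega)
  rw [smul_eq_mul, nsmul_eq_mul, nsmul_eq_mul]
  rw [eq_inv_mul_iff_mul_eq₀ hk0, hkc]
  ring
end

section
/- For integers k > r ≥ 1 and integers p_1,…,p_r, the coefficient of x^{k−r} in the formal power series (1+x)^{k−1}/∏_{i=1}^r(1+p_i x) equals the sum over all tuples (k_1,…,k_r) of nonnegative integers with k_1+⋯+k_r = k−r of ∏_{i=1}^r (1−p_i)^{k_i}. -/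
open PowerSeries

/-- The geometric series `1/(1 + p x) = Σ (−p)ⁿ xⁿ` as a formal power series. -/
noncomputable def geomNeg (p : ℤ) : PowerSeries ℚ :=
  PowerSeries.mk fun n => (-(p : ℚ)) ^ n

@[simp] lemma coeff_geomNeg (p : ℤ) (n : ℕ) : coeff (R := ℚ) n (geomNeg p) = (-(p:ℚ))^n := by
  simp [geomNeg]

lemma geomNeg_mul (p : ℤ) : (1 + C (p:ℚ) * X) * geomNeg p = 1 := by
  ext n
  rw [add_mul, one_mul, map_add, mul_assoc, coeff_C_mul]
  cases n with
  | zero => simp [geomNeg, constantCoeff_mk]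
  | succ n =>
    rw [coeff_succ_X_mul, coeff_geomNeg, coeff_geomNeg, coeff_one]
    simp [pow_succ]
    ring

lemma coeff_one_add_pow (N n : ℕ) : coeff (R := ℚ) n ((1+X)^N) = N.choose n := by
  induction N generalizing n with
  | zero => cases n <;> simp [coeff_one]
  | succ N ih =>
    have : ((1:ℚ⟦X⟧)+X)^(N+1) = (1+X)^N + X * (1+X)^N := by ring
    rw [this]
    cases n with
    | zero => simp [ih, coeff_zero_eq_constantCoeff]
    | succ n =>
      rw [map_add, ih, coeff_succ_X_mul, ih, Nat.choose_succ_succ]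
      push_cast; ring

lemma unit_ne_zero (p : ℤ) : (1 + C (p:ℚ) * X) ≠ 0 := by
  intro h
  have := congrArg (constantCoeff (R := ℚ)) h
  simp at this

lemma keyId (p : ℤ) (N s : ℕ) :
    (1+X)^(N+s+1) * geomNeg p
    = (∑ j ∈ Finset.range (N+1),
        C ((1-(p:ℚ))^j) * (X^j * (1+X)^((N-j)+s)))
      + C ((1-(p:ℚ))^(N+1)) * (X^(N+1) * ((1+X)^s * geomNeg p)) := by
  set u : ℚ⟦X⟧ := 1 + C (p:ℚ) * X with hu
  apply mul_left_cancel₀ (unit_ne_zero p)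
  have hug : u * geomNeg p = 1 := geomNeg_mul p
  have hL : u * ((1+X)^(N+s+1) * geomNeg p) = (1+X)^(N+s+1) := by
    rw [show u * ((1+X)^(N+s+1) * geomNeg p) = (1+X)^(N+s+1) * (u * geomNeg p) from by ring,
      hug, mul_one]
  rw [hL, mul_add]
  have h2 : u * (C ((1-(p:ℚ))^(N+1)) * (X^(N+1) * ((1+X)^s * geomNeg p)))
      = C ((1-(p:ℚ))^(N+1)) * (X^(N+1) * (1+X)^s) := by
    have : u * (C ((1-(p:ℚ))^(N+1)) * (X^(N+1) * ((1+X)^s * geomNeg p)))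
        = C ((1-(p:ℚ))^(N+1)) * (X^(N+1) * (1+X)^s) * (u * geomNeg p) := by ring
    rw [this, hug, mul_one]
  rw [h2, Finset.mul_sum]
  set f : ℕ → ℚ⟦X⟧ := fun j => C ((1-(p:ℚ))^j) * (X^j * (1+X)^((N+1-j)+s)) with hf
  have hterm : ∀ j ∈ Finset.range (N+1),
      u * (C ((1-(p:ℚ))^j) * (X^j * (1+X)^((N-j)+s))) = f j - f (j+1) := by
    intro j hj
    rw [Finset.mem_range] at hj
    have hj' : j ≤ N := Nat.lt_succ_iff.mp hj
    have e1 : N+1-j = (N-j)+1 := by omega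
    have e2 : N+1-(j+1) = N-j := by omega
    have e3 : N-j+1+s = (N-j+s)+1 := by omega
    simp only [hf, e1, e2, e3]
    have hu' : u = (1+X) - C (1-(p:ℚ)) * X := by
      rw [hu, map_sub, map_one]
      ring
    rw [hu', pow_succ ((1:ℚ⟦X⟧)+X) ((N-j)+s), map_pow, map_pow]
    ring
  rw [Finset.sum_congr rfl hterm, Finset.sum_range_sub' f (N+1)]
  have hf0 : f 0 = (1+X)^(N+s+1) := by
    simp only [hf]
    rw [show N+1-0+s = N+s+1 from by omega]
    simp
  have hfN : f (N+1) = C ((1-(p:ℚ))^(N+1)) * (X^(N+1) * (1+X)^s) := by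
    simp only [hf]
    rw [show N+1-(N+1)+s = s from by omega]
  rw [hf0, hfN]
  ring

lemma split (r N : ℕ) (f : Fin (r+1) → ℕ → ℚ) :
    ∑ m ∈ Finset.Nat.antidiagonalTuple (r+1) N, ∏ i, f i (m i)
    = ∑ j ∈ Finset.range (N+1),
        f 0 j * ∑ m ∈ Finset.Nat.antidiagonalTuple r (N-j), ∏ i, f i.succ (m i) := by
  rw [← Finset.Nat.sum_antidiagonal_eq_sum_range_succ
    (fun a b => f 0 a * ∑ m ∈ Finset.Nat.antidiagonalTuple r b, ∏ i, f i.succ (m i)) N]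
  simp_rw [Finset.mul_sum]
  rw [Finset.sum_sigma']
  refine Finset.sum_nbij'
    (fun m : Fin (r+1) → ℕ => (⟨(m 0, ∑ i : Fin r, m i.succ), Fin.tail m⟩ :
      (_ : ℕ × ℕ) × (Fin r → ℕ)))
    (fun x => Fin.cons x.1.1 x.2) ?_ ?_ ?_ ?_ ?_
  · intro m hm
    rw [Finset.Nat.mem_antidiagonalTuple] at hm
    simp only [Finset.mem_sigma, Finset.HasAntidiagonal.mem_antidiagonal,
      Finset.Nat.mem_antidiagonalTuple]
    exact ⟨by rw [← hm, Fin.sum_univ_succ], rfl⟩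
  · rintro ⟨⟨a, b⟩, m⟩ hx
    simp only [Finset.mem_sigma, Finset.HasAntidiagonal.mem_antidiagonal,
      Finset.Nat.mem_antidiagonalTuple] at hx
    rw [Finset.Nat.mem_antidiagonalTuple, Fin.sum_univ_succ]
    simp only [Fin.cons_zero, Fin.cons_succ]
    rw [hx.2, hx.1]
  · intro m _
    exact Fin.cons_self_tail m
  · rintro ⟨⟨a, b⟩, m⟩ hx
    simp only [Finset.mem_sigma, Finset.HasAntidiagonal.mem_antidiagonal,
      Finset.Nat.mem_antidiagonalTuple] at hx
    simp [Fin.cons_succ, Fin.tail_cons, hx.2]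
  · intro m _
    rw [Fin.prod_univ_succ]
    rfl

lemma main (r : ℕ) : ∀ (N : ℕ) (p : Fin (r+1) → ℤ),
    coeff (R := ℚ) N ((1+X)^(N+r) * ∏ i, geomNeg (p i))
    = ∑ m ∈ Finset.Nat.antidiagonalTuple (r+1) N, ∏ i, (1 - (p i:ℚ))^(m i) := by
  induction r with
  | zero =>
    intro N p
    rw [Fin.prod_univ_one, Finset.Nat.antidiagonalTuple_one, Finset.sum_singleton,
      Fin.prod_univ_one, Matrix.cons_val_zero, Nat.add_zero]
    rw [coeff_mul, Finset.Nat.sum_antidiagonal_eq_sum_range_succ_mk]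
    simp only [coeff_one_add_pow, coeff_geomNeg]
    rw [show (1:ℚ) - (p 0:ℚ) = 1 + -(p 0:ℚ) from by ring, add_pow]
    refine Finset.sum_congr rfl fun j hj => ?_
    ring
  | succ r ih =>
    intro N p
    rw [Fin.prod_univ_succ]
    rw [show ((1+X:ℚ⟦X⟧)^(N+(r+1)) * (geomNeg (p 0) * ∏ i : Fin (r+1), geomNeg (p i.succ)))
        = ((1+X)^(N+r+1) * geomNeg (p 0)) * ∏ i : Fin (r+1), geomNeg (p i.succ) from by
      rw [← mul_assoc, show N+(r+1) = N+r+1 from rfl]]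
    rw [keyId (p 0) N r, add_mul, map_add]
    have h0 : coeff (R := ℚ) N ((C ((1-(p 0:ℚ))^(N+1)) * (X^(N+1) * ((1+X)^r * geomNeg (p 0)))) *
        ∏ i : Fin (r+1), geomNeg (p i.succ)) = 0 := by
      rw [show (C ((1-(p 0:ℚ))^(N+1)) * (X^(N+1) * ((1+X)^r * geomNeg (p 0)))) *
            ∏ i : Fin (r+1), geomNeg (p i.succ)
          = C ((1-(p 0:ℚ))^(N+1)) *
            (X^(N+1) * (((1+X)^r * geomNeg (p 0)) * ∏ i : Fin (r+1), geomNeg (p i.succ)))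
          from by ring]
      rw [coeff_C_mul, coeff_X_pow_mul', if_neg (by omega)]
      ring
    rw [h0, add_zero, Finset.sum_mul, map_sum]
    have hterm : ∀ j ∈ Finset.range (N+1),
        coeff (R := ℚ) N ((C ((1-(p 0:ℚ))^j) * (X^j * (1+X)^((N-j)+r))) *
          ∏ i : Fin (r+1), geomNeg (p i.succ))
        = (1-(p 0:ℚ))^j *
            ∑ m ∈ Finset.Nat.antidiagonalTuple (r+1) (N-j), ∏ i, (1 - (p i.succ:ℚ))^(m i) := by
      intro j hj
      rw [Finset.mem_range] at hj
      rw [show (C ((1-(p 0:ℚ))^j) * (X^j * (1+X)^((N-j)+r))) *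
            ∏ i : Fin (r+1), geomNeg (p i.succ)
          = C ((1-(p 0:ℚ))^j) *
            (X^j * ((1+X)^((N-j)+r) * ∏ i : Fin (r+1), geomNeg (p i.succ)))
          from by ring]
      rw [coeff_C_mul, coeff_X_pow_mul', if_pos (by omega)]
      rw [ih (N-j) (fun i => p i.succ)]
    rw [Finset.sum_congr rfl hterm]
    exact (split (r+1) N (fun i n => (1 - (p i:ℚ))^n)).symm

/-- For integers `k > r ≥ 1` and integers `p₁,…,p_r`, the coefficient of
`x^{k−r}` in `(1+x)^{k−1} / ∏ᵢ (1+pᵢx)` equals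
`Σ_{k₁+⋯+k_r = k−r, kᵢ ≥ 0} ∏ᵢ (1−pᵢ)^{kᵢ}`. -/
theorem stmt_9 (k r : ℕ) (hr : 1 ≤ r) (hkr : r < k) (p : Fin r → ℤ) :
    coeff (R := ℚ) (k - r) ((1 + X) ^ (k - 1) * ∏ i, geomNeg (p i))
      = ∑ m ∈ Finset.Nat.antidiagonalTuple r (k - r),
          ∏ i, ((1 : ℚ) - (p i : ℚ)) ^ m i := by
  obtain ⟨r', rfl⟩ : ∃ r', r = r' + 1 := ⟨r - 1, by omega⟩
  rw [show k - 1 = (k - (r' + 1)) + r' from by omega]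
  exact main r' (k - (r' + 1)) p
end
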